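/- Let M = (M_n) be a primitive and recurrent sequence of nonnegative integer d×d matrices. Then there exists a vector u ∈ ℝ^d_{>0} such that ⋂_{n≥0} M_{[0,n)} ℝ^d_{≥0} = ℝ₊ u, where M_{[0,n)} = M_0 M_1 ⋯ M_{n−1}. -/

import Mathlib

/-- The product `M_0 M_1 ⋯ M_{n-1}` of an initial block of a sequence of matrices. -/
def matBlockProd {d : ℕ} (M : ℕ → Matrix (Fin d) (Fin d) ℝ) (m n : ℕ) :
    Matrix (Fin d) (Fin d) ℝ :=
  (((List.range (n - m)).map fun k => M (m + k))).prod

namespace Stmt7Aux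

variable {d : ℕ}

lemma list_prod_nonneg (l : List (Matrix (Fin d) (Fin d) ℝ))
    (h : ∀ A ∈ l, ∀ i j, 0 ≤ A i j) : ∀ i j, 0 ≤ l.prod i j := by
  induction l with
  | nil =>
    intro i j
    simp only [List.prod_nil]
    by_cases hij : i = j <;> simp [Matrix.one_apply, hij]
  | cons A l ih =>
    intro i j
    rw [List.prod_cons, Matrix.mul_apply]
    refine Finset.sum_nonneg fun k _ => mul_nonneg (h A (by simp) i k) ?_
    exact ih (fun B hB => h B (by simp [hB])) k j

lemma matBlockProd_nonneg (M : ℕ → Matrix (Fin d) (Fin d) ℝ)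
    (hM : ∀ n i j, 0 ≤ M n i j) (m n : ℕ) : ∀ i j, 0 ≤ matBlockProd M m n i j := by
  apply list_prod_nonneg
  intro A hA i j
  simp only [List.mem_map, List.mem_range] at hA
  obtain ⟨k, -, rfl⟩ := hA
  exact hM _ i j

lemma matBlockProd_mul (M : ℕ → Matrix (Fin d) (Fin d) ℝ) {a b c : ℕ}
    (h1 : a ≤ b) (h2 : b ≤ c) :
    matBlockProd M a c = matBlockProd M a b * matBlockProd M b c := by
  unfold matBlockProd
  rw [← List.prod_append]
  congr 1
  have h3 : c - a = (b - a) + (c - b) := by omega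
  rw [h3, List.range_add, List.map_append, List.map_map]
  congr 1
  apply List.map_congr_left
  intro k hk
  have : a + (b - a + k) = b + k := by omega
  simp only [Function.comp_apply, this]

lemma matBlockProd_same (M : ℕ → Matrix (Fin d) (Fin d) ℝ) (a : ℕ) :
    matBlockProd M a a = 1 := by simp [matBlockProd]

lemma mulVec_nonneg {A : Matrix (Fin d) (Fin d) ℝ} (hA : ∀ i j, 0 ≤ A i j)
    {x : Fin d → ℝ} (hx : ∀ i, 0 ≤ x i) : ∀ i, 0 ≤ A.mulVec x i := by
  intro i
  rw [Matrix.mulVec, dotProduct]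
  exact Finset.sum_nonneg fun j _ => mul_nonneg (hA i j) (hx j)

lemma mulVec_mono {A : Matrix (Fin d) (Fin d) ℝ} (hA : ∀ i j, 0 ≤ A i j)
    {x y : Fin d → ℝ} (h : ∀ i, x i ≤ y i) : ∀ i, A.mulVec x i ≤ A.mulVec y i := by
  intro i
  rw [Matrix.mulVec, Matrix.mulVec, dotProduct, dotProduct]
  exact Finset.sum_le_sum fun j _ => mul_le_mul_of_nonneg_left (h j) (hA i j)

lemma mulVec_pos {B : Matrix (Fin d) (Fin d) ℝ} (hB : ∀ i j, 0 < B i j)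
    {x : Fin d → ℝ} (hx : ∀ i, 0 ≤ x i) (hx0 : x ≠ 0) : ∀ i, 0 < B.mulVec x i := by
  intro i
  obtain ⟨j, hj⟩ : ∃ j, x j ≠ 0 := Function.ne_iff.mp hx0
  exact Finset.sum_pos' (fun k _ => mul_nonneg (hB i k).le (hx k))
    ⟨j, Finset.mem_univ j, mul_pos (hB i j) ((hx j).lt_of_ne (Ne.symm hj))⟩

lemma mul_pos_entries {A B : Matrix (Fin d) (Fin d) ℝ} (hA : ∀ i j, 0 < A i j)
    (hB : ∀ i j, 0 < B i j) [NeZero d] : ∀ i j, 0 < (A * B) i j := by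
  intro i j
  rw [Matrix.mul_apply]
  exact Finset.sum_pos (fun k _ => mul_pos (hA i k) (hB k j)) Finset.univ_nonempty

end Stmt7Aux
open Matrix in
section
variable {d : ℕ} {B : Matrix (Fin d) (Fin d) ℝ} {bmin bmax : ℝ}

lemma mulVec_lower (hlb : ∀ i j, bmin ≤ B i j) {x : Fin d → ℝ} (hx : ∀ i, 0 ≤ x i) :
    ∀ i, bmin * ∑ j, x j ≤ B.mulVec x i := by
  intro i
  rw [Matrix.mulVec, dotProduct, Finset.mul_sum]
  exact Finset.sum_le_sum fun j _ => mul_le_mul_of_nonneg_right (hlb i j) (hx j)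

lemma mulVec_upper (hub : ∀ i j, B i j ≤ bmax) {x : Fin d → ℝ} (hx : ∀ i, 0 ≤ x i) :
    ∀ i, B.mulVec x i ≤ bmax * ∑ j, x j := by
  intro i
  rw [Matrix.mulVec, dotProduct, Finset.mul_sum]
  exact Finset.sum_le_sum fun j _ => mul_le_mul_of_nonneg_right (hub i j) (hx j)

lemma ratio_base (h0 : 0 < bmin) (hlb : ∀ i j, bmin ≤ B i j) (hub : ∀ i j, B i j ≤ bmax)
    {x y : Fin d → ℝ} (hx : ∀ i, 0 ≤ x i) (hy : ∀ i, 0 ≤ y i)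
    (hx0 : x ≠ 0) (hy0 : y ≠ 0) :
    ∃ r > 0, (∀ i, r * B.mulVec y i ≤ B.mulVec x i) ∧
      (∀ i, B.mulVec x i ≤ ((bmax / bmin) ^ 2 * r) * B.mulVec y i) := by
  have hbb : bmin ≤ bmax := by
    obtain ⟨i⟩ : Nonempty (Fin d) := by
      rcases Nat.eq_zero_or_pos d with h | h
      · subst h; exact absurd (funext fun i => i.elim0) hx0
      · exact ⟨⟨0, h⟩⟩
    exact (hlb i i).trans (hub i i)
  have hbmax : 0 < bmax := h0.trans_le hbb
  have hSx : 0 < ∑ j, x j := by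
    obtain ⟨j, hj⟩ := Function.ne_iff.mp hx0
    exact Finset.sum_pos' (fun k _ => hx k) ⟨j, Finset.mem_univ j, (hx j).lt_of_ne (Ne.symm hj)⟩
  have hSy : 0 < ∑ j, y j := by
    obtain ⟨j, hj⟩ := Function.ne_iff.mp hy0
    exact Finset.sum_pos' (fun k _ => hy k) ⟨j, Finset.mem_univ j, (hy j).lt_of_ne (Ne.symm hj)⟩
  set Sx := ∑ j, x j
  set Sy := ∑ j, y j
  refine ⟨bmin * Sx / (bmax * Sy), by positivity, fun i => ?_, fun i => ?_⟩
  · have h1 : B.mulVec y i ≤ bmax * Sy := mulVec_upper hub hy i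
    have h2 : bmin * Sx ≤ B.mulVec x i := mulVec_lower hlb hx i
    have h3 : bmin * Sx / (bmax * Sy) * (bmax * Sy) = bmin * Sx := by
      field_simp
    nlinarith [mul_le_mul_of_nonneg_left h1 (le_of_lt (show (0:ℝ) < bmin * Sx / (bmax * Sy) by positivity))]
  · have h1 : bmin * Sy ≤ B.mulVec y i := mulVec_lower hlb hy i
    have h2 : B.mulVec x i ≤ bmax * Sx := mulVec_upper hub hx i
    have h3 : ((bmax / bmin) ^ 2 * (bmin * Sx / (bmax * Sy))) * (bmin * Sy) = bmax * Sx := by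
      field_simp
    nlinarith [mul_le_mul_of_nonneg_left h1
      (le_of_lt (show (0:ℝ) < (bmax / bmin) ^ 2 * (bmin * Sx / (bmax * Sy)) by positivity))]

lemma ratio_step (h0 : 0 < bmin) (hlb : ∀ i j, bmin ≤ B i j) (hub : ∀ i j, B i j ≤ bmax)
    {x y : Fin d → ℝ} (hx : ∀ i, 0 ≤ x i) (hy : ∀ i, 0 ≤ y i) (hy0 : y ≠ 0)
    {r R : ℝ} (hrx : ∀ i, r * y i ≤ x i) (hxR : ∀ i, x i ≤ R * y i) :
    ∃ r' R', r ≤ r' ∧ (∀ i, r' * B.mulVec y i ≤ B.mulVec x i) ∧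
      (∀ i, B.mulVec x i ≤ R' * B.mulVec y i) ∧
      R' - r' ≤ (1 - bmin / bmax) * (R - r) := by
  have hbb : bmin ≤ bmax := by
    obtain ⟨i⟩ : Nonempty (Fin d) := by
      rcases Nat.eq_zero_or_pos d with h | h
      · subst h; exact absurd (funext fun i => i.elim0) hy0
      · exact ⟨⟨0, h⟩⟩
    exact (hlb i i).trans (hub i i)
  have hbmax : 0 < bmax := h0.trans_le hbb
  have hSy : 0 < ∑ j, y j := by
    obtain ⟨j, hj⟩ := Function.ne_iff.mp hy0
    exact Finset.sum_pos' (fun k _ => hy k) ⟨j, Finset.mem_univ j, (hy j).lt_of_ne (Ne.symm hj)⟩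
  set Sy := ∑ j, y j with hSydef
  set z : Fin d → ℝ := fun j => x j - r * y j with hzdef
  have hz : ∀ j, 0 ≤ z j := fun j => by simp only [hzdef]; linarith [hrx j]
  set Sz := ∑ j, z j with hSzdef
  have hSz : 0 ≤ Sz := Finset.sum_nonneg fun j _ => hz j
  set s := Sz / Sy with hsdef
  have hs0 : 0 ≤ s := div_nonneg hSz hSy.le
  have hsSy : s * Sy = Sz := div_mul_cancel₀ _ hSy.ne'
  have hsR : s ≤ R - r := by
    have : Sz ≤ (R - r) * Sy := by
      have : ∀ j, z j ≤ (R - r) * y j := fun j => by simp only [hzdef]; linarith [hxR j]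
      calc Sz = ∑ j, z j := hSzdef
        _ ≤ ∑ j, (R - r) * y j := Finset.sum_le_sum fun j _ => this j
        _ = (R - r) * Sy := by rw [Finset.mul_sum]
    rw [hsdef, div_le_iff₀ hSy]
    linarith
  set α := bmin / bmax with hαdef
  have hα0 : 0 ≤ α := by positivity
  have hαid : α * bmax = bmin := div_mul_cancel₀ _ hbmax.ne'
  refine ⟨r + α * s, R - α * (R - r - s), by nlinarith, fun i => ?_, fun i => ?_, by nlinarith⟩
  · -- lower bound
    have hBz : bmin * Sz ≤ B.mulVec z i := mulVec_lower hlb hz i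
    have hdecomp : B.mulVec x i = r * B.mulVec y i + B.mulVec z i := by
      have : x = r • y + z := by funext j; simp [hzdef]
      rw [this, Matrix.mulVec_add, Matrix.mulVec_smul]
      simp [Pi.add_apply]
    have hByu : B.mulVec y i ≤ bmax * Sy := mulVec_upper hub hy i
    have key : α * s * B.mulVec y i ≤ bmin * Sz := by
      calc α * s * B.mulVec y i ≤ α * s * (bmax * Sy) :=
            mul_le_mul_of_nonneg_left hByu (by positivity)
        _ = bmin * Sz := by rw [← hsSy]; linear_combination s * Sy * hαid
    nlinarith [hdecomp]
  · -- upper bound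
    have hdecomp : B.mulVec x i = r * B.mulVec y i + B.mulVec z i := by
      have : x = r • y + z := by funext j; simp [hzdef]
      rw [this, Matrix.mulVec_add, Matrix.mulVec_smul]
      simp [Pi.add_apply]
    set w : Fin d → ℝ := fun j => (R - r) * y j - z j with hwdef
    have hw : ∀ j, 0 ≤ w j := fun j => by simp only [hwdef, hzdef]; linarith [hxR j]
    have hSw : ∑ j, w j = (R - r) * Sy - Sz := by
      simp only [hwdef, Finset.sum_sub_distrib, ← Finset.mul_sum, hSydef, hSzdef]
    have hBw : bmin * ((R - r) * Sy - Sz) ≤ B.mulVec w i := by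
      have := mulVec_lower hlb hw i
      rwa [hSw] at this
    have hBwdecomp : B.mulVec w i = (R - r) * B.mulVec y i - B.mulVec z i := by
      have : w = (R - r) • y - z := by funext j; simp [hwdef]
      rw [this, Matrix.mulVec_sub, Matrix.mulVec_smul]
      simp [Pi.sub_apply]
    have hByu : B.mulVec y i ≤ bmax * Sy := mulVec_upper hub hy i
    have key : α * (R - r - s) * B.mulVec y i ≤ bmin * ((R - r) * Sy - Sz) := by
      calc α * (R - r - s) * B.mulVec y i ≤ α * (R - r - s) * (bmax * Sy) := by
            apply mul_le_mul_of_nonneg_left hByu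
            nlinarith
        _ = bmin * ((R - r) * Sy - Sz) := by rw [← hsSy]; linear_combination (R - r - s) * Sy * hαid
    nlinarith [hdecomp]
end

section
variable {d : ℕ} (M : ℕ → Matrix (Fin d) (Fin d) ℝ)

open Stmt7Aux

lemma occ_block {m p : ℕ} (h : ∀ k < m, M (p + k) = M k) :
    matBlockProd M p (p + m) = matBlockProd M 0 m := by
  unfold matBlockProd
  simp only [Nat.add_sub_cancel_left, Nat.sub_zero]
  congr 1
  apply List.map_congr_left
  intro k hk
  rw [List.mem_range] at hk
  rw [h k hk, Nat.zero_add]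

lemma occ_large (hrec : ∀ m : ℕ, ∃ n ≥ 1, ∀ k < m, M k = M (n + k)) (m : ℕ) :
    ∀ N, ∃ p ≥ N, ∀ k < m, M (p + k) = M k := by
  intro N
  induction N with
  | zero => exact ⟨0, le_refl 0, fun k _ => by rw [Nat.zero_add]⟩
  | succ N ih =>
    obtain ⟨p, hp, hocc⟩ := ih
    obtain ⟨n, hn, h⟩ := hrec (p + m)
    refine ⟨n + p, by omega, fun k hk => ?_⟩
    have h1 : M (p + k) = M (n + (p + k)) := h (p + k) (by omega)
    have h2 : n + p + k = n + (p + k) := by omega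
    rw [h2, ← h1, hocc k hk]

lemma pos_large (hM : ∀ n i j, 0 ≤ M n i j) (hd : 0 < d)
    (hprim : ∀ m : ℕ, ∃ n > m, ∀ i j, 0 < matBlockProd M m n i j) :
    ∀ N, ∃ q ≥ N, ∀ i j, 0 < matBlockProd M 0 q i j := by
  haveI : NeZero d := ⟨hd.ne'⟩
  intro N
  induction N with
  | zero =>
    obtain ⟨n, hn, h⟩ := hprim 0
    exact ⟨n, Nat.zero_le n, h⟩
  | succ N ih =>
    obtain ⟨q, hq, h⟩ := ih
    obtain ⟨n, hn, h2⟩ := hprim q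
    refine ⟨n, by omega, ?_⟩
    rw [matBlockProd_mul M (Nat.zero_le q) hn.le]
    exact mul_pos_entries h h2

lemma main_est (hM : ∀ n i j, 0 ≤ M n i j) {m : ℕ} {bmin bmax : ℝ}
    (h0 : 0 < bmin)
    (hlb : ∀ i j, bmin ≤ matBlockProd M 0 m i j)
    (hub : ∀ i j, matBlockProd M 0 m i j ≤ bmax)
    (hocc : ∀ N, ∃ p ≥ N, ∀ k < m, M (p + k) = M k) :
    ∀ k s : ℕ, ∃ n, s ≤ n ∧ ∀ a b : Fin d → ℝ, (∀ i, 0 ≤ a i) → (∀ i, 0 ≤ b i) →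
      (matBlockProd M s n).mulVec a ≠ 0 → (matBlockProd M s n).mulVec b ≠ 0 →
      ∃ r > 0, (∀ i, r * (matBlockProd M s n).mulVec b i ≤ (matBlockProd M s n).mulVec a i) ∧
        (∀ i, (matBlockProd M s n).mulVec a i ≤
          ((1 + (1 - bmin / bmax) ^ k * ((bmax / bmin) ^ 2 - 1)) * r) *
            (matBlockProd M s n).mulVec b i) := by
  have hBnn : ∀ (p q : ℕ) i j, 0 ≤ matBlockProd M p q i j := fun p q =>
    matBlockProd_nonneg M hM p q
  intro k
  induction k with
  | zero =>
    intro s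
    obtain ⟨q, hq, hoccq⟩ := hocc s
    refine ⟨q + m, by omega, fun a b ha hb hA hB => ?_⟩
    have hsplit : matBlockProd M s (q + m) = matBlockProd M s q * matBlockProd M 0 m := by
      rw [matBlockProd_mul M hq (Nat.le_add_right q m), occ_block M hoccq]
    have ha0 : a ≠ 0 := by
      rintro rfl; exact hA (Matrix.mulVec_zero _)
    have hb0 : b ≠ 0 := by
      rintro rfl; exact hB (Matrix.mulVec_zero _)
    obtain ⟨r, hr, hlow, hupp⟩ := ratio_base h0 hlb hub ha hb ha0 hb0
    refine ⟨r, hr, fun i => ?_, fun i => ?_⟩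
    · rw [hsplit, ← Matrix.mulVec_mulVec, ← Matrix.mulVec_mulVec]
      calc r * (matBlockProd M s q).mulVec ((matBlockProd M 0 m).mulVec b) i
          = (matBlockProd M s q).mulVec (r • (matBlockProd M 0 m).mulVec b) i := by
            rw [Matrix.mulVec_smul]; simp
        _ ≤ (matBlockProd M s q).mulVec ((matBlockProd M 0 m).mulVec a) i := by
            apply mulVec_mono (hBnn s q)
            intro i'
            simpa using hlow i'
    · rw [hsplit, ← Matrix.mulVec_mulVec, ← Matrix.mulVec_mulVec]
      have hcoef : (1 + (1 - bmin / bmax) ^ 0 * ((bmax / bmin) ^ 2 - 1)) = (bmax / bmin) ^ 2 := by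
        ring
      rw [hcoef]
      calc (matBlockProd M s q).mulVec ((matBlockProd M 0 m).mulVec a) i
          ≤ (matBlockProd M s q).mulVec (((bmax / bmin) ^ 2 * r) • (matBlockProd M 0 m).mulVec b) i := by
            apply mulVec_mono (hBnn s q)
            intro i'
            simpa using hupp i'
        _ = ((bmax / bmin) ^ 2 * r) * (matBlockProd M s q).mulVec ((matBlockProd M 0 m).mulVec b) i := by
            rw [Matrix.mulVec_smul]; simp
  | succ k ih =>
    intro s
    obtain ⟨q, hq, hoccq⟩ := hocc s
    obtain ⟨n, hn, IH⟩ := ih (q + m)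
    refine ⟨n, by omega, fun a b ha hb hA hB => ?_⟩
    have hsplit : matBlockProd M s n =
        matBlockProd M s q * matBlockProd M 0 m * matBlockProd M (q + m) n := by
      rw [matBlockProd_mul M hq (by omega : q ≤ n),
        matBlockProd_mul M (Nat.le_add_right q m) hn, occ_block M hoccq, mul_assoc]
    set a' := (matBlockProd M (q + m) n).mulVec a with ha'def
    set b' := (matBlockProd M (q + m) n).mulVec b with hb'def
    have hXa : (matBlockProd M s n).mulVec a =
        (matBlockProd M s q).mulVec ((matBlockProd M 0 m).mulVec a') := by
      rw [hsplit, ← Matrix.mulVec_mulVec, ← Matrix.mulVec_mulVec]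
    have hXb : (matBlockProd M s n).mulVec b =
        (matBlockProd M s q).mulVec ((matBlockProd M 0 m).mulVec b') := by
      rw [hsplit, ← Matrix.mulVec_mulVec, ← Matrix.mulVec_mulVec]
    have ha' : ∀ i, 0 ≤ a' i := mulVec_nonneg (hBnn _ _) ha
    have hb' : ∀ i, 0 ≤ b' i := mulVec_nonneg (hBnn _ _) hb
    have ha'0 : a' ≠ 0 := by
      intro h; apply hA; rw [hXa, h, Matrix.mulVec_zero, Matrix.mulVec_zero]
    have hb'0 : b' ≠ 0 := by
      intro h; apply hB; rw [hXb, h, Matrix.mulVec_zero, Matrix.mulVec_zero]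
    obtain ⟨r, hr, hlow, hupp⟩ := IH a b ha hb ha'0 hb'0
    set ck : ℝ := (1 - bmin / bmax) ^ k * ((bmax / bmin) ^ 2 - 1) with hckdef
    have hbb' : bmin ≤ bmax := by
      obtain ⟨j, _⟩ := Function.ne_iff.mp ha'0
      exact (hlb j j).trans (hub j j)
    have hαle : (0:ℝ) ≤ 1 - bmin / bmax := by
      have : bmin / bmax ≤ 1 := div_le_one_of_le₀ hbb' (h0.trans_le hbb').le
      linarith
    have hck : 0 ≤ ck := by
      apply mul_nonneg (pow_nonneg hαle k)
      have h1 : (1:ℝ) ≤ bmax / bmin := (one_le_div h0).mpr hbb'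
      nlinarith
    obtain ⟨r', R', hrr', hlow', hupp', hcontr⟩ :=
      ratio_step h0 hlb hub ha' hb' hb'0 hlow hupp
    have hr' : 0 < r' := hr.trans_le hrr' 
    have hR'bound : R' ≤ (1 + (1 - bmin / bmax) ^ (k + 1) * ((bmax / bmin) ^ 2 - 1)) * r' := by
      have h1 : R' - r' ≤ (1 - bmin / bmax) * ((1 + ck * 1) * r - r) := by
        calc R' - r' ≤ (1 - bmin / bmax) * ((1 + ck) * r - r) := by
              convert hcontr using 2 <;> ring
          _ = (1 - bmin / bmax) * ((1 + ck * 1) * r - r) := by ring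
      have h2 : (1 - bmin / bmax) * ck * r ≤ (1 - bmin / bmax) * ck * r' := by
        apply mul_le_mul_of_nonneg_left hrr' (mul_nonneg hαle hck)
      have h3 : (1 - bmin / bmax) ^ (k + 1) * ((bmax / bmin) ^ 2 - 1)
          = (1 - bmin / bmax) * ck := by rw [hckdef]; ring
      nlinarith
    refine ⟨r', hr', fun i => ?_, fun i => ?_⟩
    · rw [hXa, hXb]
      calc r' * (matBlockProd M s q).mulVec ((matBlockProd M 0 m).mulVec b') i
          = (matBlockProd M s q).mulVec (r' • (matBlockProd M 0 m).mulVec b') i := by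
            rw [Matrix.mulVec_smul]; simp
        _ ≤ (matBlockProd M s q).mulVec ((matBlockProd M 0 m).mulVec a') i := by
            apply mulVec_mono (hBnn s q)
            intro i'
            simpa using hlow' i'
    · rw [hXa, hXb]
      have hBb'nn : ∀ i', 0 ≤ (matBlockProd M 0 m).mulVec b' i' :=
        mulVec_nonneg (hBnn _ _) hb'
      calc (matBlockProd M s q).mulVec ((matBlockProd M 0 m).mulVec a') i
          ≤ (matBlockProd M s q).mulVec
              (((1 + (1 - bmin / bmax) ^ (k + 1) * ((bmax / bmin) ^ 2 - 1)) * r') •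
                (matBlockProd M 0 m).mulVec b') i := by
            apply mulVec_mono (hBnn s q)
            intro i'
            simp only [Pi.smul_apply, smul_eq_mul]
            calc (matBlockProd M 0 m).mulVec a' i' ≤ R' * (matBlockProd M 0 m).mulVec b' i' :=
                  hupp' i'
              _ ≤ (1 + (1 - bmin / bmax) ^ (k + 1) * ((bmax / bmin) ^ 2 - 1)) * r' *
                    (matBlockProd M 0 m).mulVec b' i' :=
                  mul_le_mul_of_nonneg_right hR'bound (hBb'nn i')
        _ = ((1 + (1 - bmin / bmax) ^ (k + 1) * ((bmax / bmin) ^ 2 - 1)) * r') *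
              (matBlockProd M s q).mulVec ((matBlockProd M 0 m).mulVec b') i := by
            rw [Matrix.mulVec_smul]; simp
end

section Existence
variable {d : ℕ} (M : ℕ → Matrix (Fin d) (Fin d) ℝ)
open Stmt7Aux

lemma sum_mulVec (A : Matrix (Fin d) (Fin d) ℝ) (t : Fin d → ℝ) :
    ∑ i, A.mulVec t i = ∑ j, t j * (∑ i, A i j) := by
  simp only [Matrix.mulVec, dotProduct]
  rw [Finset.sum_comm]
  congr 1
  funext j
  rw [Finset.mul_sum]
  congr 1
  funext i
  ring

lemma exists_base_vec (hM : ∀ n i j, 0 ≤ M n i j) (hd : 0 < d)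
    (hprim : ∀ m : ℕ, ∃ n > m, ∀ i j, 0 < matBlockProd M m n i j) :
    ∃ u : Fin d → ℝ, (∀ i, 0 ≤ u i) ∧ (∑ i, u i = 1) ∧
      ∀ n : ℕ, u ∈ (fun x => (matBlockProd M 0 n).mulVec x) '' {x : Fin d → ℝ | ∀ i, 0 ≤ x i} := by
  haveI : NeZero d := ⟨hd.ne'⟩
  have hBnn : ∀ (p q : ℕ) i j, 0 ≤ matBlockProd M p q i j := fun p q =>
    matBlockProd_nonneg M hM p q
  set K : Set (Fin d → ℝ) := {x : Fin d → ℝ | ∀ i, 0 ≤ x i} with hK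
  set P : ℕ → Matrix (Fin d) (Fin d) ℝ := fun n => matBlockProd M 0 n with hP
  set σ : ℕ → Fin d → ℝ := fun n j => ∑ i, P n i j with hσ
  set S : ℕ → Set (Fin d → ℝ) :=
    fun n => ((fun x => (P n).mulVec x) '' K) ∩ {x | ∑ i, x i = 1} with hS
  set T : ℕ → Set (Fin d → ℝ) :=
    fun n => {t | (∀ j, 0 ≤ t j) ∧ (∑ j, t j * σ n j = 1) ∧ ∀ j, σ n j = 0 → t j = 0} with hT
  have hσnn : ∀ n j, 0 ≤ σ n j := fun n j => Finset.sum_nonneg fun i _ => hBnn 0 n i j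
  have hcol : ∀ n j, σ n j = 0 → ∀ i, P n i j = 0 := by
    intro n j hj i
    exact (Finset.sum_eq_zero_iff_of_nonneg (fun i _ => hBnn 0 n i j)).mp hj i (Finset.mem_univ i)
  -- S n = image of T n
  have hST : ∀ n, S n = (fun t => (P n).mulVec t) '' T n := by
    intro n
    ext x
    constructor
    · rintro ⟨⟨a, ha, rfl⟩, hsum⟩
      refine ⟨fun j => if σ n j = 0 then 0 else a j, ⟨fun j => ?_, ?_, fun j hj => by simp [hj]⟩, ?_⟩
      · dsimp only; split
        · exact le_rfl
        · exact ha j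
      · have : ∑ j, (if σ n j = 0 then 0 else a j) * σ n j = ∑ j, a j * σ n j := by
          apply Finset.sum_congr rfl
          intro j _
          split <;> simp_all
        rw [this, ← sum_mulVec]
        exact hsum
      · funext i
        simp only [Matrix.mulVec, dotProduct]
        apply Finset.sum_congr rfl
        intro j _
        by_cases hj : σ n j = 0
        · simp [hj, hcol n j hj i]
        · simp [hj]
    · rintro ⟨t, ⟨ht0, htsum, -⟩, rfl⟩
      refine ⟨⟨t, ht0, rfl⟩, ?_⟩
      show ∑ i, (P n).mulVec t i = 1
      rw [sum_mulVec]
      exact htsum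
  -- T n is compact
  have hTcomp : ∀ n, IsCompact (T n) := by
    intro n
    apply Metric.isCompact_of_isClosed_isBounded
    · have h1 : IsClosed {t : Fin d → ℝ | ∀ j, 0 ≤ t j} := by
        rw [Set.setOf_forall]
        exact isClosed_iInter fun j => isClosed_le continuous_const (continuous_apply j)
      have h2 : IsClosed {t : Fin d → ℝ | ∑ j, t j * σ n j = 1} :=
        isClosed_eq (continuous_finset_sum _ fun j _ => (continuous_apply j).mul continuous_const)
          continuous_const
      have h3 : IsClosed {t : Fin d → ℝ | ∀ j, σ n j = 0 → t j = 0} := by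
        rw [Set.setOf_forall]
        apply isClosed_iInter
        intro j
        by_cases hj : σ n j = 0
        · have : {t : Fin d → ℝ | σ n j = 0 → t j = 0} = {t | t j = 0} := by
            ext t; simp [hj]
          rw [this]
          exact isClosed_eq (continuous_apply j) continuous_const
        · have : {t : Fin d → ℝ | σ n j = 0 → t j = 0} = Set.univ := by
            ext t; simp [hj]
          rw [this]; exact isClosed_univ
      have : T n = {t : Fin d → ℝ | ∀ j, 0 ≤ t j} ∩
          ({t | ∑ j, t j * σ n j = 1} ∩ {t | ∀ j, σ n j = 0 → t j = 0}) := by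
        ext t; simp [hT, and_assoc]
      rw [this]
      exact h1.inter (h2.inter h3)
    · rw [Metric.isBounded_iff_subset_closedBall 0]
      refine ⟨∑ j, (if σ n j = 0 then 0 else (σ n j)⁻¹), fun t ht => ?_⟩
      obtain ⟨ht0, htsum, htz⟩ := ht
      have hCnn : ∀ j, (0:ℝ) ≤ if σ n j = 0 then 0 else (σ n j)⁻¹ := by
        intro j; split
        · exact le_rfl
        · exact inv_nonneg.mpr (hσnn n j)
      rw [Metric.mem_closedBall, dist_zero_right]
      rw [pi_norm_le_iff_of_nonneg (Finset.sum_nonneg fun j _ => hCnn j)]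
      intro j
      rw [Real.norm_eq_abs, abs_of_nonneg (ht0 j)]
      have step : t j ≤ if σ n j = 0 then 0 else (σ n j)⁻¹ := by
        by_cases hj : σ n j = 0
        · simp [hj, htz j hj]
        · have hpos : 0 < σ n j := (hσnn n j).lt_of_ne (Ne.symm hj)
          have h1 : t j * σ n j ≤ 1 := by
            rw [← htsum]
            exact Finset.single_le_sum
              (fun j' _ => mul_nonneg (ht0 j') (hσnn n j')) (Finset.mem_univ j)
          simp only [hj, if_false]
          rw [← one_div, le_div_iff₀ hpos]
          exact h1
      exact step.trans (Finset.single_le_sum (fun j' _ => hCnn j') (Finset.mem_univ j))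
  -- decompositions / antitone
  have hanti : ∀ n, S (n + 1) ⊆ S n := by
    intro n x hx
    obtain ⟨⟨a, ha, rfl⟩, hsum⟩ := hx
    have hsplit : P (n + 1) = P n * matBlockProd M n (n + 1) :=
      matBlockProd_mul M (Nat.zero_le n) (Nat.le_succ n)
    refine ⟨⟨(matBlockProd M n (n + 1)).mulVec a, mulVec_nonneg (hBnn n (n+1)) ha, ?_⟩, hsum⟩
    show (P n).mulVec ((matBlockProd M n (n + 1)).mulVec a) = (P (n + 1)).mulVec a
    rw [Matrix.mulVec_mulVec, ← hsplit]
  -- nonempty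
  have hne : ∀ n, (S n).Nonempty := by
    intro n
    obtain ⟨q, hq, hpos⟩ := pos_large M hM hd hprim n
    have hPn0 : ∃ i j, 0 < P n i j := by
      by_contra h
      push_neg at h
      have hzero : P n = 0 := by
        ext i j
        exact le_antisymm (h i j) (hBnn 0 n i j)
      have hPq : matBlockProd M 0 q = P n * matBlockProd M n q :=
        matBlockProd_mul M (Nat.zero_le n) hq
      have i : Fin d := ⟨0, hd⟩
      have hii := hpos i i
      rw [hPq, hzero, Matrix.zero_mul] at hii
      simp at hii
    obtain ⟨i, j, hij⟩ := hPn0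
    have hσj : 0 < σ n j := hij.trans_le
      (Finset.single_le_sum (fun i' _ => hBnn 0 n i' j) (Finset.mem_univ i))
    rw [hST n]
    refine ⟨_, ⟨fun j' => if j' = j then (σ n j)⁻¹ else 0, ⟨?_, ?_, ?_⟩, rfl⟩⟩
    · intro j'; dsimp only; split
      · exact inv_nonneg.mpr (hσnn n j)
      · exact le_rfl
    · rw [Finset.sum_eq_single j]
      · simp [inv_mul_cancel₀ hσj.ne']
      · intro j' _ hj'; simp [hj']
      · simp
    · intro j' hj'
      dsimp only
      split
      · next h => rw [h] at hj'; exact absurd hj' hσj.ne'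
      · rfl
  have hconts : ∀ n, Continuous fun t : Fin d → ℝ => (P n).mulVec t := by
    intro n
    have h := (Matrix.mulVecLin (P n)).continuous_of_finiteDimensional
    exact h
  have hScomp : ∀ n, IsCompact (S n) := by
    intro n
    rw [hST n]
    exact (hTcomp n).image (hconts n)
  obtain ⟨u, hu⟩ := IsCompact.nonempty_iInter_of_sequence_nonempty_isCompact_isClosed
    S hanti hne (hScomp 0) (fun n => (hScomp n).isClosed)
  rw [Set.mem_iInter] at hu
  have hu0 : u ∈ S 0 := hu 0
  obtain ⟨⟨a, ha, rfl⟩, hsum⟩ := hu0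
  refine ⟨_, ?_, hsum, fun n => (hu n).1⟩
  exact mulVec_nonneg (hBnn 0 0) ha

end Existence

open Stmt7Aux in
/-- A primitive and recurrent sequence of nonnegative integer matrices admits a
strictly positive generalized right eigenvector `u`:
`⋂_{n ≥ 0} M_{[0,n)} ℝ^d_{≥0} = ℝ₊ u`. -/
theorem stmt7 {d : ℕ} (M : ℕ → Matrix (Fin d) (Fin d) ℝ)
    -- nonnegative integer entries
    (hint : ∀ n i j, ∃ m : ℕ, M n i j = (m : ℝ))
    -- primitivity
    (hprim : ∀ m : ℕ, ∃ n > m, ∀ i j, 0 < matBlockProd M m n i j)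
    -- recurrence
    (hrec : ∀ m : ℕ, ∃ n ≥ 1, ∀ k < m, M k = M (n + k)) :
    ∃ u : Fin d → ℝ, (∀ i, 0 < u i) ∧
      (⋂ n : ℕ, (fun x => (matBlockProd M 0 n).mulVec x) '' {x : Fin d → ℝ | ∀ i, 0 ≤ x i})
        = {x : Fin d → ℝ | ∃ t : ℝ, 0 ≤ t ∧ x = t • u} := by
  classical
  rcases Nat.eq_zero_or_pos d with hd | hd
  · subst hd
    refine ⟨fun i => 1, fun i => i.elim0, ?_⟩
    ext x
    simp only [Set.mem_iInter, Set.mem_image, Set.mem_setOf_eq]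
    constructor
    · intro _
      exact ⟨0, le_rfl, funext fun i => i.elim0⟩
    · intro _ n
      exact ⟨x, fun i => i.elim0, funext fun i => i.elim0⟩
  haveI : NeZero d := ⟨hd.ne'⟩
  have i₀ : Fin d := ⟨0, hd⟩
  have hM : ∀ n i j, 0 ≤ M n i j := by
    intro n i j
    obtain ⟨m, hm⟩ := hint n i j
    rw [hm]
    exact Nat.cast_nonneg m
  obtain ⟨m, hmpos, hBpos⟩ := hprim 0
  haveI : Nonempty (Fin d × Fin d) := ⟨(i₀, i₀)⟩
  set bmin : ℝ := Finset.univ.inf' Finset.univ_nonempty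
    (fun p : Fin d × Fin d => matBlockProd M 0 m p.1 p.2) with hbmindef
  set bmax : ℝ := Finset.univ.sup' Finset.univ_nonempty
    (fun p : Fin d × Fin d => matBlockProd M 0 m p.1 p.2) with hbmaxdef
  have h0 : 0 < bmin := by
    rw [hbmindef, Finset.lt_inf'_iff]
    exact fun p _ => hBpos p.1 p.2
  have hlb : ∀ i j, bmin ≤ matBlockProd M 0 m i j := fun i j =>
    Finset.inf'_le _ (Finset.mem_univ (i, j))
  have hub : ∀ i j, matBlockProd M 0 m i j ≤ bmax := fun i j => by
    rw [hbmaxdef]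
    exact Finset.le_sup' (fun p : Fin d × Fin d => matBlockProd M 0 m p.1 p.2)
      (Finset.mem_univ (i, j))
  have hbb : bmin ≤ bmax := (hlb i₀ i₀).trans (hub i₀ i₀)
  have hbmax : 0 < bmax := h0.trans_le hbb
  have hα0 : (0:ℝ) ≤ 1 - bmin / bmax := by
    have : bmin / bmax ≤ 1 := div_le_one_of_le₀ hbb hbmax.le
    linarith
  have hαlt : 1 - bmin / bmax < 1 := by
    have : 0 < bmin / bmax := div_pos h0 hbmax
    linarith
  have hc2 : (0:ℝ) ≤ (bmax / bmin) ^ 2 - 1 := by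
    have h1 : (1:ℝ) ≤ bmax / bmin := (one_le_div h0).mpr hbb
    nlinarith
  have hest := main_est M hM h0 hlb hub (occ_large M hrec m)
  obtain ⟨u, huK, husum, humem⟩ := exists_base_vec M hM hd hprim
  have hu0 : u ≠ 0 := by
    intro h
    rw [h] at husum
    simp at husum
  have hupos : ∀ i, 0 < u i := by
    obtain ⟨a, ha, hae⟩ := humem m
    replace hae : (matBlockProd M 0 m).mulVec a = u := hae
    have ha0 : a ≠ 0 := by
      rintro rfl
      rw [Matrix.mulVec_zero] at hae
      exact hu0 hae.symm
    intro i
    rw [← hae]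
    exact mulVec_pos hBpos ha ha0 i
  -- one-sided comparison for two elements of the intersection
  have key : ∀ w z : Fin d → ℝ,
      (∀ n, w ∈ (fun x => (matBlockProd M 0 n).mulVec x) '' {x : Fin d → ℝ | ∀ i, 0 ≤ x i}) →
      w ≠ 0 →
      (∀ n, z ∈ (fun x => (matBlockProd M 0 n).mulVec x) '' {x : Fin d → ℝ | ∀ i, 0 ≤ x i}) →
      z ≠ 0 → (∀ i, 0 ≤ w i) → (∀ i, 0 ≤ z i) →
      ∀ i j, w i * z j ≤ w j * z i := by
    intro w z hw hw0 hz hz0 hwK hzK i j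
    refine le_of_forall_pos_le_add ?_
    intro δ hδ
    set c2 : ℝ := (bmax / bmin) ^ 2 - 1 with hc2def
    set D : ℝ := c2 * (w j * z i) with hDdef
    have hD : 0 ≤ D := mul_nonneg hc2 (mul_nonneg (hwK j) (hzK i))
    obtain ⟨k, hk⟩ := exists_pow_lt_of_lt_one (show (0:ℝ) < δ / (D + 1) by positivity) hαlt
    have hkD : (1 - bmin / bmax) ^ k * D < δ := by
      have hp : (0:ℝ) ≤ (1 - bmin / bmax) ^ k := pow_nonneg hα0 k
      have h1 : (1 - bmin / bmax) ^ k * (D + 1) < δ / (D + 1) * (D + 1) :=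
        mul_lt_mul_of_pos_right hk (by positivity)
      have h2 : δ / (D + 1) * (D + 1) = δ := by field_simp
      nlinarith
    obtain ⟨n, hn, hprop⟩ := hest k 0
    obtain ⟨a, ha, hae⟩ := hw n
    obtain ⟨b, hb, hbe⟩ := hz n
    replace hae : (matBlockProd M 0 n).mulVec a = w := hae
    replace hbe : (matBlockProd M 0 n).mulVec b = z := hbe
    have hA : (matBlockProd M 0 n).mulVec a ≠ 0 := by rw [hae]; exact hw0
    have hB : (matBlockProd M 0 n).mulVec b ≠ 0 := by rw [hbe]; exact hz0
    obtain ⟨r, hr, hlow, hupp⟩ := hprop a b ha hb hA hB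
    rw [hae, hbe] at hlow hupp
    set ck : ℝ := (1 - bmin / bmax) ^ k * c2 with hckdef
    have hck : 0 ≤ ck := mul_nonneg (pow_nonneg hα0 k) hc2
    have e1 : w i ≤ (1 + ck) * r * z i := hupp i
    have e2 : r * z j ≤ w j := hlow j
    have e3 : w i * z j ≤ ((1 + ck) * r * z i) * z j :=
      mul_le_mul_of_nonneg_right e1 (hzK j)
    have e4 : (1 + ck) * (r * z j) * z i ≤ (1 + ck) * w j * z i := by
      apply mul_le_mul_of_nonneg_right _ (hzK i)
      exact mul_le_mul_of_nonneg_left e2 (by linarith)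
    have e5 : ck * (w j * z i) < δ := by
      have : ck * (w j * z i) = (1 - bmin / bmax) ^ k * D := by
        rw [hckdef, hDdef]; ring
      rw [this]; exact hkD
    nlinarith
  refine ⟨u, hupos, ?_⟩
  ext x
  constructor
  · intro hx
    have hxmem : ∀ n, x ∈ (fun x => (matBlockProd M 0 n).mulVec x) ''
        {x : Fin d → ℝ | ∀ i, 0 ≤ x i} := fun n => Set.mem_iInter.mp hx n
    have hxK : ∀ i, 0 ≤ x i := by
      obtain ⟨a, ha, hae⟩ := hxmem 0
      replace hae : (matBlockProd M 0 0).mulVec a = x := hae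
      rw [matBlockProd_same, Matrix.one_mulVec] at hae
      rw [← hae]
      exact ha
    by_cases hx0 : x = 0
    · exact ⟨0, le_rfl, by simp [hx0]⟩
    · have h1 := key x u hxmem hx0 humem hu0 hxK (fun i => (hupos i).le)
      have h2 := key u x humem hu0 hxmem hx0 (fun i => (hupos i).le) hxK
      refine ⟨x i₀ / u i₀, div_nonneg (hxK i₀) (hupos i₀).le, funext fun i => ?_⟩
      have hEq : x i * u i₀ = x i₀ * u i := le_antisymm (h1 i i₀) (by nlinarith [h2 i i₀])
      have hne := (hupos i₀).ne'
      show x i = x i₀ / u i₀ * u i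
      rw [div_mul_eq_mul_div, eq_div_iff hne]
      linarith
  · rintro ⟨t, ht, rfl⟩
    refine Set.mem_iInter.mpr fun n => ?_
    obtain ⟨a, ha, hae⟩ := humem n
    replace hae : (matBlockProd M 0 n).mulVec a = u := hae
    refine ⟨t • a, fun i => mul_nonneg ht (ha i), ?_⟩
    show (matBlockProd M 0 n).mulVec (t • a) = t • u
    rw [Matrix.mulVec_smul, hae]
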